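/- Let F_1, F_2, ... be nonzero elements of a field of rational functions and let N_n(x,a) be the matrix defined recursively below; let Ṅ_n(x,a) be N_n(x,a) with its last row and first column removed. Then det Ṅ_n(x,a) = (−1)^{binom(n,2)} a^n (Π_{k=1}^n F_k) x^n Π_{m=1}^{n−1} Π_{k=1}^{n−m}(x − a q^{k−1}[m]_q). -/

import Mathlib

noncomputable section

open Finset

/-- `Nsz n = (n+1)(n+2)/2`, the size of the matrix `N_n(x,a)`. -/
def Nsz : ℕ → ℕ
  | 0 => 1
  | n + 1 => Nsz n + (n + 2)

theorem Nsz_pos (n : ℕ) : 0 < Nsz n := by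
  cases n <;> simp [Nsz]

variable {K : Type*} [Field K]

/-- The `q`-integer `[m]_q = 1 + q + ⋯ + q^{m-1}`. -/
def qint (q : K) (m : ℕ) : K := ∑ j ∈ Finset.range m, q ^ j

/-- The `q`-factorial `[m]_q!`. -/
def qfact (q : K) (m : ℕ) : K := ∏ j ∈ Finset.Icc 1 m, qint q j

/-- `F`-factorial `F_m! = F_1 F_2 ⋯ F_m` (equal to `1` for `m = 0`). -/
def Ffact (F : ℕ → K) (m : ℕ) : K := ∏ j ∈ Finset.Icc 1 m, F j

/-- The lower-right block `N̂_n` of `N_{n+1}(x,a)`: the `(n+2)×(n+2)` matrix with (1-based)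
entries `x δ_{ij} - a q^{i-1} [(n+2)-i]_q (δ_{ij} + δ_{i+1,j})`. -/
def Nhat (x a q : K) (n : ℕ) : Matrix (Fin (n + 2)) (Fin (n + 2)) K := fun i j =>
  x * (if (i : ℕ) = (j : ℕ) then 1 else 0) -
    a * q ^ (i : ℕ) * qint q (n + 1 - (i : ℕ)) *
      ((if (i : ℕ) = (j : ℕ) then 1 else 0) + (if (i : ℕ) + 1 = (j : ℕ) then 1 else 0))

/-- The upper-right block `N̄_n` of `N_{n+1}(x,a)`: only its last `n+1` rows are nonzero,
and those form the `(n+1)×(n+2)` matrix with (1-based) entries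
`-a F_{n+1} (δ_{ij} + δ_{i+1,j})`. -/
def Nbar (a : K) (F : ℕ → K) (n : ℕ) : Matrix (Fin (Nsz n)) (Fin (n + 2)) K := fun r j =>
  if Nsz n ≤ (r : ℕ) + (n + 1) then
    -a * F (n + 1) *
      ((if (r : ℕ) - (Nsz n - (n + 1)) = (j : ℕ) then 1 else 0) +
        (if (r : ℕ) - (Nsz n - (n + 1)) + 1 = (j : ℕ) then 1 else 0))
  else 0

/-- The recursively defined matrix `N_n(x,a)`. -/
def Nmat (x a q : K) (F : ℕ → K) : (n : ℕ) → Matrix (Fin (Nsz n)) (Fin (Nsz n)) K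
  | 0 => fun _ _ => x
  | n + 1 => fun p r =>
      Matrix.fromBlocks (Nmat x a q F n) (Nbar a F n) 0 (Nhat x a q n)
        (finSumFinEquiv.symm p) (finSumFinEquiv.symm r)

/-- `Ṅ_n(x,a)`: the matrix `N_n(x,a)` with its last row and first column deleted. -/
def Ndot (x a q : K) (F : ℕ → K) (n : ℕ) :
    Matrix (Fin (Nsz n - 1)) (Fin (Nsz n - 1)) K := fun i j =>
  Nmat x a q F n ⟨(i : ℕ), lt_of_lt_of_le i.isLt (Nat.sub_le _ _)⟩
    ⟨(j : ℕ) + 1, by have := j.isLt; have := Nsz_pos n; omega⟩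

open Matrix

section CR
variable {R : Type*} [CommRing R]

def qintC (q : R) (m : ℕ) : R := ∑ j ∈ Finset.range m, q ^ j

@[simp] lemma qintC_zero (q : R) : qintC q 0 = 0 := by simp [qintC]

lemma qintC_add (q : R) (s t : ℕ) : qintC q (s + t) = qintC q s + q ^ s * qintC q t := by
  rw [qintC, qintC, qintC, Finset.sum_range_add, Finset.mul_sum]
  congr 1
  exact Finset.sum_congr rfl fun i _ => pow_add q s i

/-- common product -/
def Pc (x a q : R) (n : ℕ) : R :=
  ∏ m ∈ Finset.Icc 1 (n - 1), ∏ k ∈ Finset.Icc 1 (n - m), (x - a * q ^ (k - 1) * qintC q m)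

def Tt (x a q : R) (n i : ℕ) : R := ∏ k ∈ Finset.range i, (x - a * q ^ k * qintC q (n - k))

def Vv (x a q : R) (F : ℕ → R) (n g i : ℕ) : R :=
  a ^ (n - i) * (∏ j ∈ Finset.Ico i g, (q ^ j * qintC q (n - j))) *
    (∏ h ∈ Finset.Ico g n, F (h + 1)) * x ^ n * Pc x a q n * Tt x a q n i

def D0 (x a q : R) (n : ℕ) : R :=
  x ^ (n + 1) * ∏ m ∈ Finset.Icc 1 n, ∏ k ∈ Finset.Icc 1 (n + 1 - m), (x - a * q ^ (k - 1) * qintC q m)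

/-- Row identity (I): for `i ≤ g < n`. -/
lemma rowI (x a q : R) (F : ℕ → R) (n g i : ℕ) (hig : i ≤ g) (hgn : g < n) :
    (x - a * q ^ i * qintC q (g - i)) * Vv x a q F n g i
      - a * q ^ i * qintC q (g - i) * Vv x a q F n g (i + 1)
    = a * F (g + 1) * (Vv x a q F n (g + 1) i + Vv x a q F n (g + 1) (i + 1)) := by
  rcases eq_or_lt_of_le hig with rfl | hig'
  · -- i = g
    obtain ⟨e, rfl⟩ : ∃ e, n = i + 1 + e := ⟨n - i - 1, by omega⟩
    simp only [Vv, Tt, Nat.sub_self, qintC_zero, mul_zero, zero_mul, sub_zero, Finset.Ico_self,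
      Finset.prod_empty, mul_one, one_mul]
    rw [Finset.prod_eq_prod_Ico_succ_bot (show i < i+1+e by omega) (fun h => F (h+1))]
    rw [Nat.Ico_succ_singleton]
    rw [Finset.prod_singleton, Finset.prod_range_succ]
    rw [show i+1+e - i = e+1 by omega, show i+1+e - (i+1) = e by omega]
    rw [show (q:R)^i * qintC q (e+1) = q^i * qintC q (e+1) from rfl]
    rw [show (a:R)^(e+1) = a * a^e from by rw [pow_succ]; ring]
    ring
  · -- i < g
    obtain ⟨d, rfl⟩ : ∃ d, g = i + d + 1 := ⟨g - i - 1, by omega⟩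
    obtain ⟨e, rfl⟩ : ∃ e, n = i + d + 1 + e + 1 := ⟨n - (i+d+1) - 1, by omega⟩
    simp only [Vv, Tt]
    rw [Finset.prod_eq_prod_Ico_succ_bot (show i < i+d+1 by omega)
      (fun j => q ^ j * qintC q (i+d+1+e+1 - j))]
    rw [Finset.prod_eq_prod_Ico_succ_bot (show i < i+d+1+1 by omega)
      (fun j => q ^ j * qintC q (i+d+1+e+1 - j))]
    rw [Finset.prod_Ico_succ_top (show i+1 ≤ i+d+1 by omega)
      (fun j => q ^ j * qintC q (i+d+1+e+1 - j))]
    rw [Finset.prod_eq_prod_Ico_succ_bot (show i+d+1 < i+d+1+e+1 by omega)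
      (fun h => F (h+1))]
    rw [Finset.prod_range_succ (fun k => x - a * q ^ k * qintC q (i+d+1+e+1 - k)) i]
    rw [show i+d+1+e+1 - i = (d+1)+(e+1) by omega,
        show i+d+1+e+1 - (i+1) = d+e+1 by omega,
        show i+d+1 - i = d+1 by omega,
        show i+d+1+e+1 - (i+d+1) = e+1 by omega]
    rw [qintC_add q (d+1) (e+1)]
    rw [show (q:R)^(i+d+1) = q^i * q^(d+1) from by
      rw [show i+d+1 = i+(d+1) from by omega, pow_add]]
    rw [show (a:R)^((d+1)+(e+1)) = a * a^(d+e+1) from by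
      rw [show (d+1)+(e+1) = (d+e+1)+1 from by omega, pow_succ]; ring]
    ring

/-- Row identity (II): homogeneous rows in the last block. -/
lemma rowII (x a q : R) (F : ℕ → R) (n i : ℕ) (hin : i < n) :
    (x - a * q ^ i * qintC q (n - i)) * Vv x a q F n n i
      - a * q ^ i * qintC q (n - i) * Vv x a q F n n (i + 1) = 0 := by
  obtain ⟨e, rfl⟩ : ∃ e, n = i + e + 1 := ⟨n - i - 1, by omega⟩
  simp only [Vv, Tt]
  rw [Finset.prod_eq_prod_Ico_succ_bot (show i < i+e+1 by omega)
    (fun j => q ^ j * qintC q (i+e+1 - j))]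
  rw [Finset.prod_range_succ (fun k => x - a * q ^ k * qintC q (i+e+1 - k)) i]
  rw [show i+e+1 - i = e+1 by omega]
  rw [show (a:R)^(e+1) = a * a^e from by rw [pow_succ]; ring,
      show i+e+1 - (i+1) = e by omega]
  ring

/-- reindexing lemma -/
lemma Ticc (x a q : R) (n : ℕ) :
    ∏ m ∈ Finset.Icc 1 n, (x - a * q ^ (n - m) * qintC q m)
      = ∏ k ∈ Finset.range n, (x - a * q ^ k * qintC q (n - k)) := by
  rw [← Finset.Ico_add_one_right_eq_Icc, Finset.prod_Ico_eq_prod_range,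
      ← Finset.prod_range_reflect (fun k => x - a * q ^ k * qintC q (n - k)) n]
  refine Finset.prod_congr rfl fun j hj => ?_
  rw [Finset.mem_range] at hj
  rw [show n - (1+j) = n-1-j by omega, show n - (n-1-j) = 1+j by omega]

lemma rowII' (x a q : R) (F : ℕ → R) (n : ℕ) :
    x * Vv x a q F n n n = D0 x a q n := by
  rcases n with _ | N
  · simp [Vv, Tt, Pc, D0]
  set n := N + 1
  have key : (∏ m ∈ Finset.Icc 1 n, ∏ k ∈ Finset.Icc 1 (n + 1 - m),
      (x - a * q ^ (k-1) * qintC q m)) = Pc x a q n * Tt x a q n n := by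
    have h1 : ∀ m ∈ Finset.Icc 1 n, (∏ k ∈ Finset.Icc 1 (n + 1 - m),
        (x - a * q ^ (k-1) * qintC q m))
        = (∏ k ∈ Finset.Icc 1 (n - m), (x - a * q ^ (k-1) * qintC q m))
          * (x - a * q ^ (n - m) * qintC q m) := by
      intro m hm
      rw [Finset.mem_Icc] at hm
      rw [show n+1-m = (n-m)+1 by omega, Finset.prod_Icc_succ_top (by omega)]
      rw [show (n-m)+1-1 = n-m by omega]
    rw [Finset.prod_congr rfl h1, Finset.prod_mul_distrib]
    congr 1
    · rw [Finset.prod_Icc_succ_top (show 1 ≤ N+1 by omega)]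
      rw [show n - (N+1) = 0 by omega]
      simp [Pc]
      rfl
    · rw [Ticc]; rfl
  rw [Vv, D0, key]
  simp only [Nat.sub_self, pow_zero, Finset.Ico_self, Finset.prod_empty]
  ring

lemma D0_succ (x a q : R) (n : ℕ) :
    D0 x a q (n+1) = D0 x a q n *
      (x * ∏ i ∈ Finset.range (n+1), (x - a * q ^ i * qintC q (n+1-i))) := by
  rw [D0, D0]
  have h1 : ∀ m ∈ Finset.Icc 1 (n+1), (∏ k ∈ Finset.Icc 1 (n + 2 - m),
      (x - a * q ^ (k-1) * qintC q m))
      = (∏ k ∈ Finset.Icc 1 (n + 1 - m), (x - a * q ^ (k-1) * qintC q m))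
        * (x - a * q ^ (n + 1 - m) * qintC q m) := by
    intro m hm
    rw [Finset.mem_Icc] at hm
    rw [show n+2-m = (n+1-m)+1 by omega, Finset.prod_Icc_succ_top (by omega)]
    rw [show (n+1-m)+1-1 = n+1-m by omega]
  rw [Finset.prod_congr rfl h1, Finset.prod_mul_distrib]
  rw [Finset.prod_Icc_succ_top (show 1 ≤ n+1 by omega)
    (f := fun m => ∏ k ∈ Finset.Icc 1 (n + 1 - m), (x - a * q ^ (k-1) * qintC q m))]
  rw [show n+1-(n+1) = 0 by omega]
  rw [Ticc x a q (n+1)]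
  simp only [show Finset.Icc 1 0 = (∅ : Finset ℕ) from Finset.Icc_eq_empty_of_lt (by omega),
    Finset.prod_empty, mul_one]
  ring

lemma Nsz_ge (n : ℕ) : n + 1 ≤ Nsz n := by
  induction n with
  | zero => simp [Nsz]
  | succ n ih => rw [Nsz]; omega

def NhatC (x a q : R) (n : ℕ) : Matrix (Fin (n + 2)) (Fin (n + 2)) R := fun i j =>
  x * (if (i : ℕ) = (j : ℕ) then 1 else 0) -
    a * q ^ (i : ℕ) * qintC q (n + 1 - (i : ℕ)) *
      ((if (i : ℕ) = (j : ℕ) then 1 else 0) + (if (i : ℕ) + 1 = (j : ℕ) then 1 else 0))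

def NbarC (a : R) (F : ℕ → R) (n : ℕ) : Matrix (Fin (Nsz n)) (Fin (n + 2)) R := fun r j =>
  if Nsz n ≤ (r : ℕ) + (n + 1) then
    -a * F (n + 1) *
      ((if (r : ℕ) - (Nsz n - (n + 1)) = (j : ℕ) then 1 else 0) +
        (if (r : ℕ) - (Nsz n - (n + 1)) + 1 = (j : ℕ) then 1 else 0))
  else 0

def NmatC (x a q : R) (F : ℕ → R) : (n : ℕ) → Matrix (Fin (Nsz n)) (Fin (Nsz n)) R
  | 0 => fun _ _ => x
  | n + 1 => fun p r =>
      Matrix.fromBlocks (NmatC x a q F n) (NbarC a F n) 0 (NhatC x a q n)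
        (finSumFinEquiv.symm p) (finSumFinEquiv.symm r)

def NdotC (x a q : R) (F : ℕ → R) (n : ℕ) :
    Matrix (Fin (Nsz n - 1)) (Fin (Nsz n - 1)) R := fun i j =>
  NmatC x a q F n ⟨(i : ℕ), lt_of_lt_of_le i.isLt (Nat.sub_le _ _)⟩
    ⟨(j : ℕ) + 1, by have := j.isLt; have := Nsz_pos n; omega⟩

lemma sum_ind {n : ℕ} (s : ℕ) (hs : s < n) (f : Fin n → R) :
    ∑ j : Fin n, (if s = (j : ℕ) then (1 : R) else 0) * f j = f ⟨s, hs⟩ := by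
  rw [Finset.sum_eq_single (⟨s, hs⟩ : Fin n)]
  · simp
  · intro b _ hb
    rw [if_neg, zero_mul]
    intro h
    exact hb (Fin.val_injective h.symm)
  · intro h; exact absurd (Finset.mem_univ _) h

lemma NbarC_mulVec (a : R) (F : ℕ → R) (n : ℕ) (f : Fin (n + 2) → R) (r : Fin (Nsz n)) :
    (NbarC a F n *ᵥ f) r =
      if Nsz n ≤ (r : ℕ) + (n + 1) then
        -a * F (n + 1) *
          (f ⟨(r : ℕ) - (Nsz n - (n + 1)), by have := r.isLt; have := Nsz_ge n; omega⟩ +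
           f ⟨(r : ℕ) - (Nsz n - (n + 1)) + 1, by have := r.isLt; have := Nsz_ge n; omega⟩)
      else 0 := by
  by_cases h : Nsz n ≤ (r : ℕ) + (n + 1)
  · rw [if_pos h]
    have key : ∀ j : Fin (n+2), NbarC a F n r j * f j
        = -a * F (n+1) * ((if (r : ℕ) - (Nsz n - (n + 1)) = (j : ℕ) then (1:R) else 0) * f j
            + (if (r : ℕ) - (Nsz n - (n + 1)) + 1 = (j : ℕ) then (1:R) else 0) * f j) := by
      intro j; rw [NbarC, if_pos h]; ring
    rw [show (NbarC a F n *ᵥ f) r = ∑ j, NbarC a F n r j * f j from rfl]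
    rw [Finset.sum_congr rfl fun j _ => key j, ← Finset.mul_sum, Finset.sum_add_distrib]
    rw [sum_ind _ (by have := r.isLt; have := Nsz_ge n; omega) f,
        sum_ind _ (by have := r.isLt; have := Nsz_ge n; omega) f]
  · rw [if_neg h]
    rw [show (NbarC a F n *ᵥ f) r = ∑ j, NbarC a F n r j * f j from rfl]
    apply Finset.sum_eq_zero
    intro j _
    rw [NbarC, if_neg h, zero_mul]

lemma NhatC_mulVec (x a q : R) (n : ℕ) (f : Fin (n + 2) → R) (j : Fin (n + 2)) :
    (NhatC x a q n *ᵥ f) j = x * f j - a * q ^ (j : ℕ) * qintC q (n + 1 - (j : ℕ)) *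
      (f j + (if h : (j : ℕ) + 1 < n + 2 then f ⟨(j : ℕ) + 1, h⟩ else 0)) := by
  have key : ∀ k : Fin (n+2), NhatC x a q n j k * f k
      = x * ((if (j : ℕ) = (k : ℕ) then (1:R) else 0) * f k)
        - a * q ^ (j : ℕ) * qintC q (n + 1 - (j : ℕ)) *
          ((if (j : ℕ) = (k : ℕ) then (1:R) else 0) * f k
            + (if (j : ℕ) + 1 = (k : ℕ) then (1:R) else 0) * f k) := by
    intro k; rw [NhatC]; ring
  rw [show (NhatC x a q n *ᵥ f) j = ∑ k, NhatC x a q n j k * f k from rfl]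
  rw [Finset.sum_congr rfl fun k _ => key k, Finset.sum_sub_distrib, ← Finset.mul_sum,
      ← Finset.mul_sum, Finset.sum_add_distrib]
  rw [sum_ind _ j.isLt f]
  have hW : ∑ k : Fin (n+2), (if (j:ℕ) + 1 = (k:ℕ) then (1:R) else 0) * f k
      = (if h : (j : ℕ) + 1 < n + 2 then f ⟨(j : ℕ) + 1, h⟩ else 0) := by
    by_cases h : (j : ℕ) + 1 < n + 2
    · rw [dif_pos h, sum_ind _ h f]
    · rw [dif_neg h]
      apply Finset.sum_eq_zero
      intro k _
      rw [if_neg (by have := k.isLt; omega), zero_mul]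
  rw [hW]

def wvec (x a q : R) (F : ℕ → R) (n₀ : ℕ) : (n : ℕ) → Fin (Nsz n) → R
  | 0 => fun _ => Vv x a q F n₀ 0 0
  | n + 1 => fun p =>
      Sum.elim (wvec x a q F n₀ n) (fun j : Fin (n + 2) => Vv x a q F n₀ (n + 1) (j : ℕ))
        (finSumFinEquiv.symm p)

def bvec (x a q : R) (F : ℕ → R) (n₀ n : ℕ) : Fin (Nsz n) → R := fun r =>
  if Nsz n ≤ (r : ℕ) + (n + 1) then
    a * F (n + 1) * (Vv x a q F n₀ (n + 1) ((r : ℕ) - (Nsz n - (n + 1)))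
      + Vv x a q F n₀ (n + 1) ((r : ℕ) - (Nsz n - (n + 1)) + 1))
  else 0

lemma blocks_mulVec {m k : ℕ} (A : Matrix (Fin m) (Fin m) R) (B : Matrix (Fin m) (Fin k) R)
    (D : Matrix (Fin k) (Fin k) R) (wt : Fin m → R) (wb : Fin k → R) :
    ((fun p r => Matrix.fromBlocks A B 0 D (finSumFinEquiv.symm p) (finSumFinEquiv.symm r)) :
        Matrix (Fin (m + k)) (Fin (m + k)) R)
      *ᵥ (fun p => Sum.elim wt wb (finSumFinEquiv.symm p))
    = fun p => Sum.elim (A *ᵥ wt + B *ᵥ wb) (D *ᵥ wb) (finSumFinEquiv.symm p) := by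
  show (Matrix.fromBlocks A B 0 D).submatrix (⇑finSumFinEquiv.symm) (⇑finSumFinEquiv.symm)
      *ᵥ (fun p => Sum.elim wt wb (finSumFinEquiv.symm p)) = _
  rw [Matrix.submatrix_mulVec_equiv (e₂ := finSumFinEquiv.symm)]
  have hcomp : ((fun p => Sum.elim wt wb (finSumFinEquiv.symm p)) ∘ ⇑finSumFinEquiv.symm.symm)
      = Sum.elim wt wb := by
    funext z
    show Sum.elim wt wb (finSumFinEquiv.symm (finSumFinEquiv.symm.symm z)) = _
    rw [Equiv.symm_symm, Equiv.symm_apply_apply]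
  rw [hcomp, Matrix.fromBlocks_mulVec]
  funext p
  show Sum.elim _ _ (finSumFinEquiv.symm p) = _
  rcases finSumFinEquiv.symm p with i | j
  · simp
  · simp [Matrix.zero_mulVec]

lemma claimAux (x a q : R) (F : ℕ → R) (n₀ : ℕ) :
    ∀ n, n < n₀ → NmatC x a q F n *ᵥ wvec x a q F n₀ n = bvec x a q F n₀ n := by
  intro n
  induction n with
  | zero =>
    intro h0
    funext r
    have h1 : Nsz 0 = 1 := rfl
    have hr : (r : ℕ) = 0 := by have := r.isLt; omega
    have hrow := rowI x a q F n₀ 0 0 le_rfl h0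
    simp only [Nat.sub_self, qintC_zero, mul_zero, zero_mul, sub_zero] at hrow
    have hL : (NmatC x a q F 0 *ᵥ wvec x a q F n₀ 0) r = x * Vv x a q F n₀ 0 0 := by
      rw [show (NmatC x a q F 0 *ᵥ wvec x a q F n₀ 0) r
          = ∑ j, NmatC x a q F 0 r j * wvec x a q F n₀ 0 j from rfl]
      rw [Finset.sum_eq_single (⟨0, Nsz_pos 0⟩ : Fin (Nsz 0))]
      · rfl
      · intro b _ hb
        exact absurd (Fin.val_injective (by have := b.isLt; omega :
          (b : ℕ) = ((⟨0, Nsz_pos 0⟩ : Fin (Nsz 0)) : ℕ))) hb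
      · intro h; exact absurd (Finset.mem_univ _) h
    rw [hL, bvec, if_pos (by omega), hr]
    rw [show Nsz 0 - (0 + 1) = 0 from by omega]
    rw [hrow]
  | succ n IH =>
    intro hlt
    have hn : n < n₀ := by omega
    have hsz : Nsz (n + 1) = Nsz n + (n + 2) := rfl
    have key := blocks_mulVec (NmatC x a q F n) (NbarC a F n) (NhatC x a q n)
      (wvec x a q F n₀ n) (fun j : Fin (n + 2) => Vv x a q F n₀ (n + 1) (j : ℕ))
    refine Eq.trans key ?_
    funext p
    obtain ⟨z, rfl⟩ : ∃ z, finSumFinEquiv z = p := ⟨finSumFinEquiv.symm p, Equiv.apply_symm_apply _ _⟩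
    show Sum.elim _ _ (finSumFinEquiv.symm (finSumFinEquiv z)) = _
    rw [Equiv.symm_apply_apply]
    rcases z with i | j
    · -- top block rows
      have hcoe : ((finSumFinEquiv (Sum.inl i) : Fin (Nsz n + (n + 2))) : ℕ) = (i : ℕ) := by
        rw [finSumFinEquiv_apply_left]; exact Fin.coe_castAdd _ _
      rw [Sum.elim_inl, Pi.add_apply, IH hn, NbarC_mulVec]
      simp only [bvec]
      rw [if_neg (show ¬ Nsz (n+1) ≤ ((finSumFinEquiv (Sum.inl i) : Fin (Nsz n + (n + 2))) : ℕ)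
          + (n + 1 + 1) from by rw [hcoe, hsz]; have := i.isLt; omega)]
      by_cases hc : Nsz n ≤ (i : ℕ) + (n + 1)
      · rw [if_pos hc, if_pos hc]; ring
      · rw [if_neg hc, if_neg hc]; ring
    · -- bottom block rows
      have hcoe : ((finSumFinEquiv (Sum.inr j) : Fin (Nsz n + (n + 2))) : ℕ) = Nsz n + (j : ℕ) := by
        rw [finSumFinEquiv_apply_right]; exact Fin.coe_natAdd _ _
      rw [Sum.elim_inr, NhatC_mulVec]
      simp only [bvec]
      rw [if_pos (show Nsz (n+1) ≤ ((finSumFinEquiv (Sum.inr j) : Fin (Nsz n + (n + 2))) : ℕ)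
          + (n + 1 + 1) from by rw [hcoe, hsz]; have := j.isLt; omega)]
      rw [show ((finSumFinEquiv (Sum.inr j) : Fin (Nsz n + (n + 2))) : ℕ) - (Nsz (n + 1) - (n + 2))
          = (j : ℕ) from by rw [hcoe, hsz]; omega]
      have hrow := rowI x a q F n₀ (n + 1) (j : ℕ) (by have := j.isLt; omega) hlt
      by_cases hj : (j : ℕ) + 1 < n + 2
      · rw [dif_pos hj]
        linear_combination hrow
      · rw [dif_neg hj]
        rw [show n + 1 - (j:ℕ) = 0 from by have := j.isLt; omega, qintC_zero] at hrow ⊢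
        linear_combination hrow

lemma finalLem (x a q : R) (F : ℕ → R) (N : ℕ) :
    NmatC x a q F (N+1) *ᵥ wvec x a q F (N+1) (N+1)
      = fun r : Fin (Nsz (N+1)) => if (r : ℕ) + 1 = Nsz (N+1) then D0 x a q (N+1) else 0 := by
  have hsz : Nsz (N + 1) = Nsz N + (N + 2) := rfl
  have key := blocks_mulVec (NmatC x a q F N) (NbarC a F N) (NhatC x a q N)
    (wvec x a q F (N+1) N) (fun j : Fin (N + 2) => Vv x a q F (N+1) (N + 1) (j : ℕ))
  refine Eq.trans key ?_
  funext p
  obtain ⟨z, rfl⟩ : ∃ z, finSumFinEquiv z = p := ⟨finSumFinEquiv.symm p, Equiv.apply_symm_apply _ _⟩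
  show Sum.elim _ _ (finSumFinEquiv.symm (finSumFinEquiv z)) = _
  rw [Equiv.symm_apply_apply]
  rcases z with i | j
  · have hcoe : ((finSumFinEquiv (Sum.inl i) : Fin (Nsz N + (N + 2))) : ℕ) = (i : ℕ) := by
      rw [finSumFinEquiv_apply_left]; exact Fin.coe_castAdd _ _
    rw [Sum.elim_inl, Pi.add_apply, claimAux x a q F (N+1) N (by omega), NbarC_mulVec]
    rw [if_neg (show ¬ ((finSumFinEquiv (Sum.inl i) : Fin (Nsz N + (N + 2))) : ℕ) + 1
        = Nsz (N+1) from by rw [hcoe, hsz]; have := i.isLt; have := Nsz_ge N; omega)]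
    simp only [bvec]
    by_cases hc : Nsz N ≤ (i : ℕ) + (N + 1)
    · rw [if_pos hc, if_pos hc]; ring
    · rw [if_neg hc, if_neg hc]; ring
  · have hcoe : ((finSumFinEquiv (Sum.inr j) : Fin (Nsz N + (N + 2))) : ℕ) = Nsz N + (j : ℕ) := by
      rw [finSumFinEquiv_apply_right]; exact Fin.coe_natAdd _ _
    rw [Sum.elim_inr, NhatC_mulVec]
    by_cases hj' : (j : ℕ) = N + 1
    · rw [if_pos (show ((finSumFinEquiv (Sum.inr j) : Fin (Nsz N + (N + 2))) : ℕ) + 1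
          = Nsz (N+1) from by rw [hcoe, hsz]; omega)]
      rw [show N + 1 - (j : ℕ) = 0 from by omega, qintC_zero, hj']
      linear_combination rowII' x a q F (N+1)
    · rw [if_neg (show ¬ ((finSumFinEquiv (Sum.inr j) : Fin (Nsz N + (N + 2))) : ℕ) + 1
          = Nsz (N+1) from by rw [hcoe, hsz]; omega)]
      rw [dif_pos (show (j : ℕ) + 1 < N + 2 from by have := j.isLt; omega)]
      linear_combination rowII x a q F (N+1) (j : ℕ) (by have := j.isLt; omega)

lemma detNhatC (x a q : R) (n : ℕ) :
    (NhatC x a q n).det = x * ∏ i ∈ Finset.range (n+1), (x - a * q ^ i * qintC q (n+1-i)) := by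
  rw [Matrix.det_of_upperTriangular (show (NhatC x a q n).BlockTriangular id from by
    intro i j hij
    have h1 : (j : ℕ) < (i : ℕ) := hij
    rw [NhatC, if_neg (by omega), if_neg (by omega)]
    ring)]
  have h2 : ∀ i : Fin (n+2), NhatC x a q n i i = x - a * q ^ (i:ℕ) * qintC q (n+1-(i:ℕ)) := by
    intro i
    rw [NhatC, if_pos rfl, if_neg (by omega)]
    ring
  rw [Finset.prod_congr rfl fun i _ => h2 i]
  rw [Fin.prod_univ_eq_prod_range (fun k => x - a * q ^ k * qintC q (n+1-k)) (n+2)]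
  rw [Finset.prod_range_succ]
  rw [show n + 1 - (n+1) = 0 from by omega, qintC_zero]
  ring

lemma detNmatC (x a q : R) (F : ℕ → R) : ∀ n, (NmatC x a q F n).det = D0 x a q n := by
  intro n
  induction n with
  | zero =>
    rw [show (NmatC x a q F 0).det = x from Matrix.det_fin_one_of _]
    simp [D0]
  | succ n IH =>
    have hmat : NmatC x a q F (n + 1)
        = (Matrix.fromBlocks (NmatC x a q F n) (NbarC a F n) 0 (NhatC x a q n)).submatrix
            (⇑finSumFinEquiv.symm) (⇑finSumFinEquiv.symm) := rfl
    have hdet : (NmatC x a q F (n+1)).det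
        = (Matrix.fromBlocks (NmatC x a q F n) (NbarC a F n) 0 (NhatC x a q n)).det := by
      rw [hmat]
      exact Matrix.det_submatrix_equiv_self finSumFinEquiv.symm _
    rw [hdet, Matrix.det_fromBlocks_zero₂₁, IH, detNhatC, D0_succ]

lemma wvec_zero (x a q : R) (F : ℕ → R) (n₀ : ℕ) :
    ∀ n, wvec x a q F n₀ n ⟨0, Nsz_pos n⟩ = Vv x a q F n₀ 0 0 := by
  intro n
  induction n with
  | zero => rfl
  | succ n IH =>
    show Sum.elim _ _ (finSumFinEquiv.symm (⟨0, Nsz_pos (n+1)⟩ : Fin (Nsz n + (n+2)))) = _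
    rw [show (⟨0, Nsz_pos (n+1)⟩ : Fin (Nsz n + (n+2)))
        = Fin.castAdd (n+2) ⟨0, Nsz_pos n⟩ from Fin.ext rfl]
    rw [finSumFinEquiv_symm_apply_castAdd, Sum.elim_inl, IH]

lemma updateRow_det (x a q : R) (F : ℕ → R) (n : ℕ) :
    ((NmatC x a q F n).updateRow ⟨Nsz n - 1, by have := Nsz_pos n; omega⟩
        (Pi.single ⟨0, Nsz_pos n⟩ 1)).det
      = (-1 : R) ^ (Nsz n - 1) * (NdotC x a q F n).det := by
  have hsz : Nsz n = (Nsz n - 1) + 1 := by have := Nsz_pos n; omega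
  set m := Nsz n - 1 with hm
  set r0 : Fin (Nsz n) := ⟨m, by omega⟩ with hr0
  set A := (NmatC x a q F n).updateRow r0 (Pi.single ⟨0, Nsz_pos n⟩ 1) with hA
  let e3 : Fin (m + 1) ≃ Fin (Nsz n) := finCongr hsz.symm
  have hre : A.det = (A.submatrix e3 e3).det := (Matrix.det_submatrix_equiv_self e3 _).symm
  rw [hre, Matrix.det_succ_row _ (Fin.last m)]
  rw [Finset.sum_eq_single (0 : Fin (m + 1))]
  · have he1 : e3 (Fin.last m) = r0 := Fin.ext (by simp [e3, hr0])
    have he2 : e3 (0 : Fin (m+1)) = ⟨0, Nsz_pos n⟩ := Fin.ext (by simp [e3])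
    have hent : (A.submatrix e3 e3) (Fin.last m) 0 = 1 := by
      rw [Matrix.submatrix_apply, he1, he2, hA, Matrix.updateRow_self, Pi.single_eq_same]
    rw [hent]
    have hminor : (A.submatrix e3 e3).submatrix (Fin.last m).succAbove
        (0 : Fin (m+1)).succAbove = NdotC x a q F n := by
      funext i j
      rw [Fin.succAbove_last, Fin.succAbove_zero]
      rw [Matrix.submatrix_apply, Matrix.submatrix_apply]
      have hne : e3 (Fin.castSucc i) ≠ r0 := by
        intro h
        have := congrArg Fin.val h
        simp [e3, hr0] at this
        omega
      have hi : e3 (Fin.castSucc i)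
          = (⟨(i:ℕ), lt_of_lt_of_le i.isLt (Nat.sub_le _ _)⟩ : Fin (Nsz n)) :=
        Fin.ext (by simp [e3])
      have hj2 : e3 (Fin.succ j)
          = (⟨(j:ℕ)+1, by have := j.isLt; have := Nsz_pos n; omega⟩ : Fin (Nsz n)) :=
        Fin.ext (by simp [e3])
      rw [hA, Matrix.updateRow_ne hne, hi, hj2]
      rfl
    rw [hminor]
    simp [Fin.val_last]
    rfl
  · intro b _ hb
    have hent : (A.submatrix e3 e3) (Fin.last m) b = 0 := by
      rw [Matrix.submatrix_apply]
      have he1 : e3 (Fin.last m) = r0 := Fin.ext (by simp [e3, hr0])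
      rw [he1, hA, Matrix.updateRow_self]
      rw [Pi.single_apply]
      rw [if_neg]
      intro h
      apply hb
      have := congrArg Fin.val h
      simp [e3] at this
      exact this
    rw [hent, mul_zero, zero_mul]
  · intro h; exact absurd (Finset.mem_univ _) h

lemma Nsz_choose (n : ℕ) : Nsz n = n.choose 2 + 2 * n + 1 := by
  induction n with
  | zero => rfl
  | succ n ih =>
    have h : (n+1).choose 2 = n.choose 1 + n.choose 2 := Nat.choose_succ_succ n 1
    rw [Nat.choose_one_right] at h
    rw [Nsz, ih, h]
    ring

lemma Ffact_reindex (F : ℕ → R) (n : ℕ) :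
    (∏ h ∈ Finset.Ico 0 n, F (h + 1)) = ∏ j ∈ Finset.Icc 1 n, F j := by
  rw [← Finset.Ico_add_one_right_eq_Icc, Finset.prod_Ico_eq_prod_range, Finset.prod_Ico_eq_prod_range]
  simp only [Nat.succ_sub_one, Nat.sub_zero]
  exact Finset.prod_congr rfl fun j _ => by rw [show 0 + j + 1 = 1 + j from by omega]

lemma coreLem [IsDomain R] (x a q : R) (F : ℕ → R) (n : ℕ) (hn : 1 ≤ n)
    (hD : D0 x a q n ≠ 0) :
    (NdotC x a q F n).det
      = (-1 : R) ^ n.choose 2 * a ^ n * (∏ j ∈ Finset.Icc 1 n, F j) * x ^ n * Pc x a q n := by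
  obtain ⟨N, rfl⟩ : ∃ N, n = N + 1 := ⟨n - 1, by omega⟩
  set n := N + 1
  set M := NmatC x a q F n with hM
  set w := wvec x a q F n n with hw
  set elv : Fin (Nsz n) → R := fun r => if (r : ℕ) + 1 = Nsz n then (1 : R) else 0 with helv
  have hfin' : M *ᵥ w = D0 x a q n • elv := by
    rw [hM, hw, finalLem x a q F N]
    funext r
    by_cases h : (r : ℕ) + 1 = Nsz n
    · rw [if_pos h]; simp [helv, h, smul_eq_mul]; rfl
    · rw [if_neg h]; simp [helv, h, smul_eq_mul]
  have huniq : D0 x a q n • w = D0 x a q n • (M.adjugate *ᵥ elv) := by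
    have h1 : M.adjugate *ᵥ (M *ᵥ w) = D0 x a q n • w := by
      rw [Matrix.mulVec_mulVec, Matrix.adjugate_mul, detNmatC, Matrix.smul_mulVec,
        Matrix.one_mulVec]
    have h2 : M.adjugate *ᵥ (M *ᵥ w) = D0 x a q n • (M.adjugate *ᵥ elv) := by
      rw [hfin', Matrix.mulVec_smul]
    rw [← h1, h2]
  have hval : w ⟨0, Nsz_pos n⟩ = (M.adjugate *ᵥ elv) ⟨0, Nsz_pos n⟩ := by
    have := congrFun huniq ⟨0, Nsz_pos n⟩
    simp only [Pi.smul_apply, smul_eq_mul] at this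
    exact mul_left_cancel₀ hD this
  have hlast : (M.adjugate *ᵥ elv) ⟨0, Nsz_pos n⟩
      = M.adjugate ⟨0, Nsz_pos n⟩ ⟨Nsz n - 1, by have := Nsz_pos n; omega⟩ := by
    rw [show (M.adjugate *ᵥ elv) ⟨0, Nsz_pos n⟩
        = ∑ j, M.adjugate ⟨0, Nsz_pos n⟩ j * elv j from rfl]
    rw [Finset.sum_eq_single (⟨Nsz n - 1, by have := Nsz_pos n; omega⟩ : Fin (Nsz n))]
    · have he : elv ⟨Nsz n - 1, by have := Nsz_pos n; omega⟩ = 1 := by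
        simp only [helv]
        rw [if_pos (by have := Nsz_pos n; omega)]
      rw [he, mul_one]
    · intro b _ hb
      have he : elv b = 0 := by
        simp only [helv]
        rw [if_neg]
        intro h
        apply hb
        exact Fin.ext (show (b:ℕ) = Nsz n - 1 from by omega)
      rw [he, mul_zero]
    · intro h; exact absurd (Finset.mem_univ _) h
  have hadj : M.adjugate ⟨0, Nsz_pos n⟩ ⟨Nsz n - 1, by have := Nsz_pos n; omega⟩
      = (-1 : R) ^ (Nsz n - 1) * (NdotC x a q F n).det := by
    rw [Matrix.adjugate_apply, hM, updateRow_det]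
  have hVv : Vv x a q F n 0 0 = (-1 : R) ^ (Nsz n - 1) * (NdotC x a q F n).det := by
    rw [← hadj, ← hlast, ← hval, hw, wvec_zero]
  have hsq : (-1 : R) ^ (Nsz n - 1) * (-1 : R) ^ (Nsz n - 1) = 1 := by
    rw [← mul_pow]
    simp
  have hdet : (NdotC x a q F n).det = (-1 : R) ^ (Nsz n - 1) * Vv x a q F n 0 0 := by
    rw [hVv, ← mul_assoc, hsq, one_mul]
  rw [hdet]
  have hVv0 : Vv x a q F n 0 0
      = a ^ n * (∏ j ∈ Finset.Icc 1 n, F j) * x ^ n * Pc x a q n := by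
    rw [Vv, Tt]
    simp only [Nat.sub_zero, Finset.Ico_self, Finset.prod_empty, Finset.range_zero, mul_one]
    rw [Ffact_reindex]
  rw [hVv0]
  have hsign : (-1 : R) ^ (Nsz n - 1) = (-1 : R) ^ n.choose 2 := by
    rw [show Nsz n - 1 = n.choose 2 + 2 * n from by have := Nsz_choose n; omega]
    rw [pow_add, pow_mul]
    simp
  rw [hsign]
  ring

variable {S : Type*} [CommRing S]

lemma qintC_map (φ : R →+* S) (q : R) (m : ℕ) : φ (qintC q m) = qintC (φ q) m := by
  simp [qintC, map_sum, map_pow]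

lemma Pc_map (φ : R →+* S) (x a q : R) (n : ℕ) :
    φ (Pc x a q n) = Pc (φ x) (φ a) (φ q) n := by
  simp [Pc, map_prod, map_sub, _root_.map_mul, map_pow, qintC_map]

lemma NmatC_map (φ : R →+* S) (x a q : R) (F : ℕ → R) :
    ∀ n, (NmatC x a q F n).map φ = NmatC (φ x) (φ a) (φ q) (fun k => φ (F k)) n := by
  intro n
  induction n with
  | zero => rfl
  | succ n IH =>
    funext p r
    show φ (Matrix.fromBlocks (NmatC x a q F n) (NbarC a F n) 0 (NhatC x a q n)
        (finSumFinEquiv.symm p) (finSumFinEquiv.symm r))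
      = Matrix.fromBlocks (NmatC (φ x) (φ a) (φ q) (fun k => φ (F k)) n)
          (NbarC (φ a) (fun k => φ (F k)) n) 0 (NhatC (φ x) (φ a) (φ q) n)
          (finSumFinEquiv.symm p) (finSumFinEquiv.symm r)
    rcases finSumFinEquiv.symm p with i | i <;> rcases finSumFinEquiv.symm r with j | j
    · show φ (NmatC x a q F n i j) = NmatC (φ x) (φ a) (φ q) (fun k => φ (F k)) n i j
      rw [← IH]; rfl
    · show φ (NbarC a F n i j) = NbarC (φ a) (fun k => φ (F k)) n i j
      rw [NbarC, NbarC]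
      by_cases h : Nsz n ≤ (i : ℕ) + (n + 1)
      · rw [if_pos h, if_pos h]
        simp [apply_ite φ, _root_.map_mul, _root_.map_add, map_neg, _root_.map_one, map_zero]
      · rw [if_neg h, if_neg h, map_zero]
    · show φ ((0 : Matrix (Fin (n+2)) (Fin (Nsz n)) R) i j) = 0
      simp
    · show φ (NhatC x a q n i j) = NhatC (φ x) (φ a) (φ q) n i j
      rw [NhatC, NhatC]
      simp [apply_ite φ, map_sub, _root_.map_mul, _root_.map_add, map_pow, _root_.map_one,
        map_zero, qintC_map]

lemma NdotC_map (φ : R →+* S) (x a q : R) (F : ℕ → R) (n : ℕ) :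
    (NdotC x a q F n).map φ = NdotC (φ x) (φ a) (φ q) (fun k => φ (F k)) n := by
  funext i j
  show φ (NdotC x a q F n i j) = _
  rw [show φ (NdotC x a q F n i j)
      = (NmatC x a q F n).map φ ⟨(i : ℕ), lt_of_lt_of_le i.isLt (Nat.sub_le _ _)⟩
        ⟨(j : ℕ) + 1, by have := j.isLt; have := Nsz_pos n; omega⟩ from rfl]
  rw [NmatC_map]
  rfl

end CR

section Transfer
open MvPolynomial

/-- variable assignment -/
def assign {S : Type*} [CommRing S] (x a q : S) (F : ℕ → S) : ℕ → S := fun k =>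
  if k = 0 then x else if k = 1 then a else if k = 2 then q else F (k - 3)

def phiH {S : Type*} [CommRing S] (x a q : S) (F : ℕ → S) : MvPolynomial ℕ ℤ →+* S :=
  MvPolynomial.eval₂Hom (Int.castRingHom S) (assign x a q F)

lemma mainCR {S : Type*} [CommRing S] (x a q : S) (F : ℕ → S) (n : ℕ) (hn : 1 ≤ n) :
    (NdotC x a q F n).det
      = (-1 : S) ^ n.choose 2 * a ^ n * (∏ j ∈ Finset.Icc 1 n, F j) * x ^ n * Pc x a q n := by
  classical
  have hD : D0 (X 0 : MvPolynomial ℕ ℤ) (X 1) (X 2) n ≠ 0 := by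
    have hfac : ∀ m k : ℕ, ((X 0 : MvPolynomial ℕ ℤ) - X 1 * X 2 ^ (k - 1) * qintC (X 2) m) ≠ 0 := by
      intro m k hz
      have h1 := congrArg (MvPolynomial.eval (fun i => if i = 0 then (1 : ℤ) else 0)) hz
      simp [qintC] at h1
    rw [D0]
    apply mul_ne_zero
    · exact pow_ne_zero _ (MvPolynomial.X_ne_zero _)
    · rw [Finset.prod_ne_zero_iff]
      intro m _
      rw [Finset.prod_ne_zero_iff]
      intro k _
      exact hfac m k
  have hcore := coreLem (X 0 : MvPolynomial ℕ ℤ) (X 1) (X 2) (fun k => X (k + 3)) n hn hD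
  have hφ0 : phiH x a q F (X 0) = x := by simp [phiH, assign]
  have hφ1 : phiH x a q F (X 1) = a := by simp [phiH, assign]
  have hφ2 : phiH x a q F (X 2) = q := by simp [phiH, assign]
  have hφF : (fun k => phiH x a q F ((fun k => (X (k + 3) : MvPolynomial ℕ ℤ)) k)) = F := by
    funext k
    simp only [phiH, MvPolynomial.eval₂Hom_X', assign]
    rw [if_neg (by omega), if_neg (by omega), if_neg (by omega),
      show k + 3 - 3 = k from by omega]
  have hmap := congrArg (phiH x a q F) hcore
  rw [RingHom.map_det, RingHom.mapMatrix_apply, NdotC_map, hφ0, hφ1, hφ2, hφF] at hmap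
  rw [_root_.map_mul, _root_.map_mul, _root_.map_mul, _root_.map_mul, map_pow, map_pow,
    map_pow, map_neg, _root_.map_one, map_prod, Pc_map, hφ0, hφ1, hφ2] at hmap
  rw [hmap]
  have : ∀ j ∈ Finset.Icc 1 n, phiH x a q F (X (j + 3)) = F j := fun j _ => congrFun hφF j
  rw [Finset.prod_congr rfl this]

end Transfer

/-- `det Ṅ_n(x,a) = (-1)^{C(n,2)} a^n F_n! x^n ∏_{m=1}^{n-1} ∏_{k=1}^{n-m} (x - a q^{k-1} [m]_q)`. -/
theorem stmt17 {K : Type*} [Field K] (x a q : K) (F : ℕ → K)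
    (hF : ∀ m : ℕ, 1 ≤ m → F m ≠ 0) (n : ℕ) (hn : 1 ≤ n) :
    (Ndot x a q F n).det =
      (-1 : K) ^ n.choose 2 * a ^ n * Ffact F n * x ^ n *
        ∏ m ∈ Finset.Icc 1 (n - 1), ∏ k ∈ Finset.Icc 1 (n - m),
          (x - a * q ^ (k - 1) * qint q m) := by
  have hNmat : ∀ N, (Nmat x a q F N : Matrix (Fin (Nsz N)) (Fin (Nsz N)) K)
      = NmatC x a q F N := by
    intro N
    induction N with
    | zero => rfl
    | succ N IH =>
      funext p r
      show Matrix.fromBlocks (Nmat x a q F N) (Nbar a F N) 0 (Nhat x a q N)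
          (finSumFinEquiv.symm p) (finSumFinEquiv.symm r)
        = Matrix.fromBlocks (NmatC x a q F N) (NbarC a F N) 0 (NhatC x a q N)
          (finSumFinEquiv.symm p) (finSumFinEquiv.symm r)
      rw [IH, show (Nbar a F N : Matrix _ _ K) = NbarC a F N from rfl,
        show (Nhat x a q N : Matrix _ _ K) = NhatC x a q N from rfl]
  have hNd : Ndot x a q F n = NdotC x a q F n := by
    funext i j
    show Nmat x a q F n _ _ = NmatC x a q F n _ _
    rw [hNmat]
  rw [hNd, mainCR x a q F n hn]
  rw [show (Pc x a q n : K) = ∏ m ∈ Finset.Icc 1 (n-1), ∏ k ∈ Finset.Icc 1 (n-m),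
      (x - a * q ^ (k-1) * qint q m) from rfl,
    show (Ffact F n : K) = ∏ j ∈ Finset.Icc 1 n, F j from rfl]
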